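/- The Maslov grading M and Alexander grading A of a generator of a grid diagram are integers (not just half-integers), and are independent of the choice of α and β circles along which the torus is cut open to form the planar diagram. -/
import Mathlib


def Jpt (a b : ℚ × ℚ) : ℚ := if 0 < (a.1 - b.1) * (a.2 - b.2) then 1/2 else 0

def JJ (n : ℕ) [NeZero n] (f g : ZMod n → ℚ × ℚ) : ℚ :=
  ∑ i : ZMod n, ∑ j : ZMod n, Jpt (f i) (g j)

/-- Planar coordinate of the column/row `i` when the torus is cut open along the
circle `s`: columns are renumbered `0, …, n−1` starting just after `s`. -/
def cCoord (n : ℕ) (s i : ZMod n) : ℚ := (((i - s : ZMod n)).val : ℚ)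

/-- The points of a generator `x`, cut open along the β circle `s` and α circle `t`. -/
def genPtC (n : ℕ) (s t : ZMod n) (x : Equiv.Perm (ZMod n)) (i : ZMod n) : ℚ × ℚ :=
  (cCoord n s i, cCoord n t (x i))

/-- The marking `O_i` (center of square `(i, ρ i)`), in the cut `(s, t)`. -/
def oPtC (n : ℕ) (s t : ZMod n) (ρ : Equiv.Perm (ZMod n)) (i : ZMod n) : ℚ × ℚ :=
  (cCoord n s i + 1/2, cCoord n t (ρ i) + 1/2)

/-- The marking `X_i` (center of square `(i-1, ρ i)`), in the cut `(s, t)`. -/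
def xPtC (n : ℕ) (s t : ZMod n) (ρ : Equiv.Perm (ZMod n)) (i : ZMod n) : ℚ × ℚ :=
  (cCoord n s (i - 1) + 1/2, cCoord n t (ρ i) + 1/2)

/-- Maslov grading computed with the cut `(s, t)`. -/
def MGrC (n : ℕ) [NeZero n] (s t : ZMod n) (ρ x : Equiv.Perm (ZMod n)) : ℚ :=
  JJ n (genPtC n s t x) (genPtC n s t x) - JJ n (genPtC n s t x) (oPtC n s t ρ)
    - JJ n (oPtC n s t ρ) (genPtC n s t x) + JJ n (oPtC n s t ρ) (oPtC n s t ρ) + 1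

/-- Alexander grading computed with the cut `(s, t)`. -/
def AGrC (n : ℕ) [NeZero n] (s t : ZMod n) (ρ x : Equiv.Perm (ZMod n)) : ℚ :=
  JJ n (genPtC n s t x) (xPtC n s t ρ) - JJ n (genPtC n s t x) (oPtC n s t ρ)
    - (1/2) * (JJ n (xPtC n s t ρ) (xPtC n s t ρ) - JJ n (xPtC n s t ρ) (oPtC n s t ρ)
        + JJ n (oPtC n s t ρ) (xPtC n s t ρ) - JJ n (oPtC n s t ρ) (oPtC n s t ρ))
    - ((n : ℚ) - 1)/2

def sg (r : ℚ) : ℤ := if 0 < r then 1 else if r < 0 then -1 else 0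

lemma sg_zero : sg 0 = 0 := by simp [sg]

lemma sg_neg (r : ℚ) : sg (-r) = - sg r := by
  unfold sg
  rcases lt_trichotomy r 0 with h|h|h
  · rw [if_pos (by linarith : (0:ℚ) < -r), if_neg (by linarith : ¬ (0:ℚ) < r), if_pos h]
    norm_num
  · simp [h]
  · rw [if_neg (by linarith : ¬ (0:ℚ) < -r), if_pos h, if_pos (by linarith : -r < 0)]

lemma sg_eq_one {r : ℚ} (h : 0 < r) : sg r = 1 := by simp [sg, h]

lemma sg_eq_negone {r : ℚ} (h : r < 0) : sg r = -1 := by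
  simp [sg, h, not_lt.2 (le_of_lt h)]

lemma Jpt_sg (a b : ℚ × ℚ) :
    Jpt a b = (((sg (a.1-b.1) * sg (a.2-b.2))^2 + sg (a.1-b.1) * sg (a.2-b.2) : ℤ) : ℚ) / 4 := by
  unfold Jpt sg
  rcases lt_trichotomy (a.1-b.1) 0 with h1|h1|h1 <;>
    rcases lt_trichotomy (a.2-b.2) 0 with h2|h2|h2 <;>
    split_ifs
  all_goals try norm_num
  all_goals try (exfalso; nlinarith)

lemma sg_natsub_half (a b : ℕ) : sg ((a:ℚ) - b - 1/2) = if b < a then 1 else -1 := by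
  split_ifs with h
  · have h2 : (b:ℚ)+1 ≤ a := by exact_mod_cast h
    exact sg_eq_one (by linarith)
  · have h2 : (a:ℚ) ≤ b := by exact_mod_cast not_lt.1 h
    exact sg_eq_negone (by linarith)

lemma sg_natsub_addhalf (a b : ℕ) : sg ((a:ℚ) - b + 1/2) = if b ≤ a then 1 else -1 := by
  split_ifs with h
  · have h2 : (b:ℚ) ≤ a := by exact_mod_cast h
    exact sg_eq_one (by linarith)
  · have h2 : (a:ℚ)+1 ≤ b := by exact_mod_cast not_le.1 h
    exact sg_eq_negone (by linarith)

lemma sg_natsub (a b : ℕ) : sg ((a:ℚ) - (b:ℚ)) = if b < a then 1 else if a < b then -1 else 0 := by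
  rcases Nat.lt_trichotomy a b with h|h|h
  · rw [if_neg (by omega), if_pos h]
    have h2 : (a:ℚ) < b := by exact_mod_cast h
    exact sg_eq_negone (by linarith)
  · subst h; simp [sg_zero]
  · rw [if_pos h]
    have h2 : (b:ℚ) < a := by exact_mod_cast h
    exact sg_eq_one (by linarith)

def Ez (n : ℕ) (s i j : ZMod n) : ℤ := sg (cCoord n s i - cCoord n s j)

section Coord
variable {n : ℕ} [NeZero n]

lemma Ez_diag (s i : ZMod n) : Ez n s i i = 0 := by simp [Ez, sg_zero]

lemma Ez_antisymm (s i j : ZMod n) : Ez n s j i = - Ez n s i j := by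
  rw [Ez, Ez, ← sg_neg]; ring_nf

lemma cCoord_val_ne {s i j : ZMod n} (h : i ≠ j) : (i - s).val ≠ (j - s).val := by
  intro he
  have h2 : i - s = j - s := ZMod.val_injective n he
  exact h (by have := congrArg (· + s) h2; simpa using this)

lemma cCoord_inj {s i j : ZMod n} (h : i ≠ j) : cCoord n s i ≠ cCoord n s j := by
  intro he
  rw [cCoord, cCoord] at he
  exact cCoord_val_ne (s := s) h (by exact_mod_cast he)

lemma Ez_pm {s i j : ZMod n} (h : i ≠ j) : Ez n s i j = 1 ∨ Ez n s i j = -1 := by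
  rw [Ez, cCoord, cCoord, sg_natsub]
  have := cCoord_val_ne (s := s) h
  split_ifs with h1 h2
  · left; rfl
  · right; rfl
  · omega

lemma sg_cc_sub_half (s t : ZMod n) (i j : ZMod n) :
    sg (cCoord n s i - cCoord n s j - 1/2) = Ez n s i j - (if i = j then 1 else 0) := by
  by_cases h : i = j
  · subst h
    have h2 : cCoord n s i - cCoord n s i - 1/2 = -(1/2) := by ring
    rw [h2, if_pos rfl, Ez_diag, sg_eq_negone (by norm_num : (-(1/2) : ℚ) < 0)]
    norm_num
  · rw [if_neg h, cCoord, cCoord, sg_natsub_half, Ez, cCoord, cCoord, sg_natsub]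
    have := cCoord_val_ne (s := s) h
    split_ifs <;> omega

lemma sg_cc_add_half (s t : ZMod n) (i j : ZMod n) :
    sg (cCoord n s i - cCoord n s j + 1/2) = Ez n s i j + (if i = j then 1 else 0) := by
  by_cases h : i = j
  · subst h
    have h2 : cCoord n s i - cCoord n s i + 1/2 = 1/2 := by ring
    rw [h2, if_pos rfl, Ez_diag, sg_eq_one (by norm_num : (0:ℚ) < 1/2)]
    norm_num
  · rw [if_neg h, cCoord, cCoord, sg_natsub_addhalf, Ez, cCoord, cCoord, sg_natsub]
    have := cCoord_val_ne (s := s) h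
    split_ifs <;> omega

lemma val_sub_one {u : ZMod n} (h : u ≠ 0) : (u - 1).val = u.val - 1 ∧ 1 ≤ u.val := by
  have h1 : 1 ≤ u.val := by
    rcases Nat.eq_zero_or_pos u.val with h0|h0
    · exact absurd (by rwa [ZMod.val_eq_zero] at h0) h
    · exact h0
  have h2 : u - 1 = ((u.val - 1 : ℕ) : ZMod n) := by
    rw [Nat.cast_sub h1, ZMod.natCast_zmod_val u]
    norm_num
  rw [h2, ZMod.val_natCast_of_lt (by have := ZMod.val_lt u; omega)]
  exact ⟨rfl, h1⟩

lemma val_neg_one' : (-1 : ZMod n).val = n - 1 := by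
  have h1 : 1 ≤ n := Nat.one_le_iff_ne_zero.2 (NeZero.ne n)
  have h2 : (-1 : ZMod n) = ((n - 1 : ℕ) : ZMod n) := by
    push_cast [Nat.cast_sub h1]
    simp [ZMod.natCast_self]
  rw [h2, ZMod.val_natCast_of_lt (by omega)]

lemma cCoord_self (s : ZMod n) : cCoord n s s = 0 := by
  simp [cCoord]

lemma cCoord_succ {s i : ZMod n} (h : i ≠ s) : cCoord n (s+1) i = cCoord n s i - 1 := by
  have hne : i - s ≠ 0 := fun hc => h (by rwa [sub_eq_zero] at hc)
  obtain ⟨h1, h2⟩ := val_sub_one hne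
  have : i - (s + 1) = (i - s) - 1 := by ring
  rw [cCoord, cCoord, this, h1, Nat.cast_sub h2]
  norm_num

lemma cCoord_succ_self (s : ZMod n) : cCoord n (s+1) s = (n : ℚ) - 1 := by
  have : s - (s+1) = (-1 : ZMod n) := by ring
  rw [cCoord, this, val_neg_one', Nat.cast_sub (Nat.one_le_iff_ne_zero.2 (NeZero.ne n))]
  norm_num

end Coord

def Phi (n : ℕ) [NeZero n] (s : ZMod n) (B : ZMod n → ZMod n → ℚ) : ℚ :=
  ∑ i : ZMod n, ∑ j : ZMod n, ((Ez n s i j : ℤ) : ℚ) * B i j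

section PhiSec
variable {n : ℕ} [NeZero n]

lemma Ez_base_off {s i : ZMod n} (h : i ≠ s) : Ez n s s i = -1 := by
  have hne : i - s ≠ 0 := fun hc => h (by rwa [sub_eq_zero] at hc)
  have h1 : 1 ≤ (i - s).val := by
    rcases Nat.eq_zero_or_pos (i - s).val with h0|h0
    · exact absurd (by rwa [ZMod.val_eq_zero] at h0) hne
    · exact h0
  rw [Ez, cCoord_self, cCoord]
  have h2 : (1:ℚ) ≤ ((i - s).val : ℚ) := by exact_mod_cast h1
  exact sg_eq_negone (by linarith)

lemma Ez_succ_off {s i : ZMod n} (h : i ≠ s) : Ez n (s+1) s i = 1 := by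
  have h1 : (i - (s+1)).val ≠ n - 1 := by
    intro hc
    apply h
    have h2 : (i - (s+1)).val = (-1 : ZMod n).val := by rw [val_neg_one', hc]
    have h3 := ZMod.val_injective n h2
    have := congrArg (· + (s+1)) h3
    simpa using this
  have h2 : (i - (s+1)).val < n - 1 := by have := ZMod.val_lt (i - (s+1)); omega
  rw [Ez, cCoord_succ_self, cCoord]
  have h3 : ((i - (s+1)).val : ℚ) < (n:ℚ) - 1 := by
    have hn : 1 ≤ n := Nat.one_le_iff_ne_zero.2 (NeZero.ne n)
    have : ((i - (s+1)).val : ℚ) < ((n - 1 : ℕ) : ℚ) := by exact_mod_cast h2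
    rw [Nat.cast_sub hn] at this
    simpa using this
  exact sg_eq_one (by linarith)

lemma Ez_succ_q (s i j : ZMod n) :
    ((Ez n (s+1) i j : ℤ) : ℚ) = ((Ez n s i j : ℤ) : ℚ)
      + 2*(if i = s then (1:ℚ) else 0)*(1 - if j = s then (1:ℚ) else 0)
      - 2*(if j = s then (1:ℚ) else 0)*(1 - if i = s then (1:ℚ) else 0) := by
  by_cases hi : i = s <;> by_cases hj : j = s
  · subst hi; subst hj; simp [Ez_diag]
  · subst hi
    rw [Ez_succ_off (fun hc => hj hc), Ez_base_off (fun hc => hj hc), if_pos rfl, if_neg hj]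
    norm_num
  · have e1 : Ez n (s+1) i s = -1 := by
      rw [Ez_antisymm, Ez_succ_off (fun hc => hi hc)]
    have e2 : Ez n s i s = 1 := by
      rw [Ez_antisymm, Ez_base_off (fun hc => hi hc)]; norm_num
    rw [hj, e1, e2, if_pos rfl, if_neg hi]
    norm_num
  · have e1 : Ez n (s+1) i j = Ez n s i j := by
      rw [Ez, Ez, cCoord_succ hi, cCoord_succ hj]
      ring_nf
    rw [e1, if_neg hi, if_neg hj]
    ring

lemma Phi_step (s : ZMod n) (B : ZMod n → ZMod n → ℚ) :
    Phi n (s+1) B = Phi n s B + 2 * (∑ j, B s j) - 2 * (∑ i, B i s) := by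
  unfold Phi
  have h : ∀ i j : ZMod n, ((Ez n (s+1) i j : ℤ) : ℚ) * B i j
      = ((Ez n s i j : ℤ) : ℚ) * B i j
        + ((if i = s then (2:ℚ)*B i j else 0) - (if i = s then (if j = s then (2:ℚ)*B i j else 0) else 0))
        - ((if j = s then (2:ℚ)*B i j else 0) - (if j = s then (if i = s then (2:ℚ)*B i j else 0) else 0)) := by
    intro i j
    rw [Ez_succ_q]
    by_cases hi : i = s <;> by_cases hj : j = s <;> simp [hi, hj] <;> ring
  simp only [h, Finset.sum_add_distrib, Finset.sum_sub_distrib]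
  simp only [Finset.sum_ite_irrel, Finset.sum_ite_eq', Finset.mem_univ, if_true,
    Finset.sum_const_zero]
  rw [Finset.mul_sum, Finset.mul_sum]
  ring
end PhiSec

section PhiSec2
variable {n : ℕ} [NeZero n]

lemma Phi_shift {B : ZMod n → ZMod n → ℚ} (hrow : ∀ k, ∑ j, B k j = 0)
    (hcol : ∀ k, ∑ i, B i k = 0) (s s' : ZMod n) : Phi n s B = Phi n s' B := by
  have key : ∀ (m : ℕ) (u : ZMod n), Phi n (u + (m : ZMod n)) B = Phi n u B := by
    intro m
    induction m with
    | zero => intro u; simp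
    | succ k ih =>
        intro u
        have h1 : u + ((k+1 : ℕ) : ZMod n) = (u + (k : ZMod n)) + 1 := by push_cast; ring
        rw [h1, Phi_step, hrow, hcol, ih]
        ring
  have h1 := key (s' - s).val s
  have h2 : s + ((s' - s).val : ZMod n) = s' := by
    rw [ZMod.natCast_zmod_val]; ring
  rw [h2] at h1
  exact h1.symm

lemma sum_zmod_val (F : ℕ → ℚ) : ∑ j : ZMod n, F (j.val) = ∑ v ∈ Finset.range n, F v := by
  rw [← Fin.sum_univ_eq_sum_range]
  apply Fintype.sum_bijective (fun k : ZMod n => (⟨k.val, ZMod.val_lt k⟩ : Fin n))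
  · rw [Fintype.bijective_iff_injective_and_card]
    constructor
    · intro a b hab
      exact ZMod.val_injective n (by simpa using congrArg Fin.val hab)
    · simp [ZMod.card]
  · intro x; rfl

lemma sum_coord (t : ZMod n) (σ : Equiv.Perm (ZMod n)) (F : ℚ → ℚ) :
    ∑ j : ZMod n, F (cCoord n t (σ j)) = ∑ v ∈ Finset.range n, F ((v : ℕ) : ℚ) := by
  have h1 : ∑ j : ZMod n, F (cCoord n t (σ j)) = ∑ j : ZMod n, F (cCoord n t j) :=
    Equiv.sum_comp σ (fun j => F (cCoord n t j))
  have h2 : ∑ j : ZMod n, F (cCoord n t j) = ∑ j : ZMod n, F ((j.val : ℚ)) :=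
    Equiv.sum_comp (Equiv.subRight t) (fun u => F ((u.val : ℚ)))
  rw [h1, h2, sum_zmod_val (fun v => F (v : ℚ))]

lemma filter_range_lt (m N : ℕ) (h : m ≤ N) :
    (Finset.range N).filter (fun v => v < m) = Finset.range m := by
  ext v; simp; omega

lemma sum_sg_sub_half {m N : ℕ} (h : m ≤ N) :
    ∑ v ∈ Finset.range N, ((sg ((m:ℚ) - v - 1/2) : ℤ) : ℚ) = 2*m - N := by
  have h1 : ∀ v : ℕ, ((sg ((m:ℚ) - v - 1/2) : ℤ) : ℚ) = 2*(if v < m then (1:ℚ) else 0) - 1 := by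
    intro v; rw [sg_natsub_half]; split_ifs <;> norm_num
  simp only [h1]
  rw [Finset.sum_sub_distrib, Finset.sum_const, ← Finset.mul_sum, Finset.sum_boole,
    filter_range_lt m N h]
  simp only [Finset.card_range, nsmul_eq_mul, mul_one]
lemma sum_sg_sub {m N : ℕ} (h : m < N) :
    ∑ v ∈ Finset.range N, ((sg ((m:ℚ) - v) : ℤ) : ℚ) = 2*m + 1 - N := by
  have h1 : ∀ v : ℕ, ((sg ((m:ℚ) - v) : ℤ) : ℚ)
      = ((sg ((m:ℚ) - v - 1/2) : ℤ) : ℚ) + (if v = m then (1:ℚ) else 0) := by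
    intro v; rw [sg_natsub_half, sg_natsub]; split_ifs <;> (first | omega | norm_num)
  simp only [h1]
  rw [Finset.sum_add_distrib, sum_sg_sub_half (le_of_lt h), Finset.sum_ite_eq' (Finset.range N)]
  rw [if_pos (Finset.mem_range.2 h)]
  ring

lemma sum_sg_add_half {m N : ℕ} (h : m < N) :
    ∑ v ∈ Finset.range N, ((sg ((m:ℚ) - v + 1/2) : ℤ) : ℚ) = 2*m + 2 - N := by
  have h1 : ∀ v : ℕ, ((sg ((m:ℚ) - v + 1/2) : ℤ) : ℚ) = 2*(if v < m+1 then (1:ℚ) else 0) - 1 := by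
    intro v; rw [sg_natsub_addhalf]; split_ifs <;> (first | omega | norm_num)
  simp only [h1]
  rw [Finset.sum_sub_distrib, Finset.sum_const, ← Finset.mul_sum, Finset.sum_boole,
    filter_range_lt (m+1) N h]
  simp only [Finset.card_range, nsmul_eq_mul, mul_one]
  push_cast
  ring

lemma sum_sg_sub_half' {m N : ℕ} (h : m < N) :
    ∑ v ∈ Finset.range N, ((sg ((v:ℚ) - m - 1/2) : ℤ) : ℚ) = N - 2*m - 2 := by
  have h1 : ∀ v : ℕ, ((sg ((v:ℚ) - m - 1/2) : ℤ) : ℚ) = -((sg ((m:ℚ) - v + 1/2) : ℤ) : ℚ) := by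
    intro v
    have : (v:ℚ) - m - 1/2 = -((m:ℚ) - v + 1/2) := by ring
    rw [this, sg_neg]; push_cast; ring
  simp only [h1]
  rw [Finset.sum_neg_distrib, sum_sg_add_half h]
  ring

lemma sum_sg_sub' {m N : ℕ} (h : m < N) :
    ∑ v ∈ Finset.range N, ((sg ((v:ℚ) - m) : ℤ) : ℚ) = N - 1 - 2*m := by
  have h1 : ∀ v : ℕ, ((sg ((v:ℚ) - m) : ℤ) : ℚ) = -((sg ((m:ℚ) - v) : ℤ) : ℚ) := by
    intro v
    have : (v:ℚ) - m = -((m:ℚ) - v) := by ring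
    rw [this, sg_neg]; push_cast; ring
  simp only [h1]
  rw [Finset.sum_neg_distrib, sum_sg_sub h]
  ring

lemma sum_sg_add_half' {m N : ℕ} (h : m ≤ N) :
    ∑ v ∈ Finset.range N, ((sg ((v:ℚ) - m + 1/2) : ℤ) : ℚ) = N - 2*m := by
  have h1 : ∀ v : ℕ, ((sg ((v:ℚ) - m + 1/2) : ℤ) : ℚ) = -((sg ((m:ℚ) - v - 1/2) : ℤ) : ℚ) := by
    intro v
    have : (v:ℚ) - m + 1/2 = -((m:ℚ) - v - 1/2) := by ring
    rw [this, sg_neg]; push_cast; ring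
  simp only [h1]
  rw [Finset.sum_neg_distrib, sum_sg_sub_half h]
  ring

end PhiSec2

def Az (n : ℕ) (t : ZMod n) (f g : ZMod n → ZMod n) (i j : ZMod n) : ℤ :=
  sg (cCoord n t (f i) - cCoord n t (g j) - 1/2)

def A'z (n : ℕ) (t : ZMod n) (f g : ZMod n → ZMod n) (i j : ZMod n) : ℤ :=
  sg (cCoord n t (f i) - cCoord n t (g j) + 1/2)

def WMz (n : ℕ) (t : ZMod n) (ρ x : Equiv.Perm (ZMod n)) (i j : ZMod n) : ℤ :=
  Ez n t (x i) (x j) - Az n t x ρ i j - A'z n t ρ x i j + Ez n t (ρ i) (ρ j)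

section Decomp
variable {n : ℕ} [NeZero n]

lemma Az_pm (t : ZMod n) (f g : ZMod n → ZMod n) (i j : ZMod n) :
    Az n t f g i j = 1 ∨ Az n t f g i j = -1 := by
  rw [Az, cCoord, cCoord, sg_natsub_half]
  split_ifs
  · exact Or.inl rfl
  · exact Or.inr rfl

lemma A'z_eq_neg (t : ZMod n) (f g : ZMod n → ZMod n) (i j : ZMod n) :
    A'z n t f g i j = - Az n t g f j i := by
  rw [A'z, Az]
  have h : cCoord n t (f i) - cCoord n t (g j) + 1/2
      = -(cCoord n t (g j) - cCoord n t (f i) - 1/2) := by ring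
  rw [h, sg_neg]

lemma Ez_pm_of_inj (t : ZMod n) (x : Equiv.Perm (ZMod n)) {i j : ZMod n} (h : i ≠ j) :
    Ez n t (x i) (x j) = 1 ∨ Ez n t (x i) (x j) = -1 :=
  Ez_pm (fun hc => h (x.injective hc))

lemma MGr_pointwise (s t : ZMod n) (ρ x : Equiv.Perm (ZMod n)) (i j : ZMod n) :
    Jpt (genPtC n s t x i) (genPtC n s t x j) - Jpt (genPtC n s t x i) (oPtC n s t ρ j)
      - Jpt (oPtC n s t ρ i) (genPtC n s t x j) + Jpt (oPtC n s t ρ i) (oPtC n s t ρ j)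
    = ((Ez n s i j : ℤ) : ℚ) * ((WMz n t ρ x i j : ℤ) : ℚ) / 4
      + (if i = j then ((Az n t x ρ i i : ℤ) : ℚ)/2 - 1/2 else 0) := by
  rw [Jpt_sg, Jpt_sg, Jpt_sg, Jpt_sg]
  have e1 : (genPtC n s t x i).1 - (genPtC n s t x j).1 = cCoord n s i - cCoord n s j := rfl
  have e1' : (genPtC n s t x i).2 - (genPtC n s t x j).2
      = cCoord n t (x i) - cCoord n t (x j) := rfl
  have e2 : (genPtC n s t x i).1 - (oPtC n s t ρ j).1
      = cCoord n s i - cCoord n s j - 1/2 := by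
    show cCoord n s i - (cCoord n s j + 1/2) = _; ring
  have e2' : (genPtC n s t x i).2 - (oPtC n s t ρ j).2
      = cCoord n t (x i) - cCoord n t (ρ j) - 1/2 := by
    show cCoord n t (x i) - (cCoord n t (ρ j) + 1/2) = _; ring
  have e3 : (oPtC n s t ρ i).1 - (genPtC n s t x j).1
      = cCoord n s i - cCoord n s j + 1/2 := by
    show cCoord n s i + 1/2 - cCoord n s j = _; ring
  have e3' : (oPtC n s t ρ i).2 - (genPtC n s t x j).2
      = cCoord n t (ρ i) - cCoord n t (x j) + 1/2 := by
    show cCoord n t (ρ i) + 1/2 - cCoord n t (x j) = _; ring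
  have e4 : (oPtC n s t ρ i).1 - (oPtC n s t ρ j).1 = cCoord n s i - cCoord n s j := by
    show cCoord n s i + 1/2 - (cCoord n s j + 1/2) = _; ring
  have e4' : (oPtC n s t ρ i).2 - (oPtC n s t ρ j).2
      = cCoord n t (ρ i) - cCoord n t (ρ j) := by
    show cCoord n t (ρ i) + 1/2 - (cCoord n t (ρ j) + 1/2) = _; ring
  rw [e1, e1', e2, e2', e3, e3', e4, e4', sg_cc_sub_half s t, sg_cc_add_half s t, WMz]
  show _ = ((Ez n s i j : ℤ) : ℚ)
      * ((Ez n t (x i) (x j) - Az n t (⇑x) (⇑ρ) i j - A'z n t (⇑ρ) (⇑x) i j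
          + Ez n t (ρ i) (ρ j) : ℤ) : ℚ) / 4
      + (if i = j then ((Az n t (⇑x) (⇑ρ) i i : ℤ) : ℚ)/2 - 1/2 else 0)
  rw [show sg (cCoord n t (x i) - cCoord n t (ρ j) - 1/2) = Az n t (⇑x) (⇑ρ) i j from rfl,
    show sg (cCoord n t (ρ i) - cCoord n t (x j) + 1/2) = A'z n t (⇑ρ) (⇑x) i j from rfl]
  by_cases h : i = j
  · subst h
    rw [if_pos rfl, Ez_diag, Ez_diag, Ez_diag,
      A'z_eq_neg t (⇑ρ) (⇑x) i i]
    rcases Az_pm t (⇑x) (⇑ρ) i i with ha | ha <;> rw [ha] <;> norm_num [sg_zero]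
  · rw [if_neg h, if_neg h,
      show sg (cCoord n s i - cCoord n s j) = Ez n s i j from rfl,
      show sg (cCoord n t (x i) - cCoord n t (x j)) = Ez n t (x i) (x j) from rfl,
      show sg (cCoord n t (ρ i) - cCoord n t (ρ j)) = Ez n t (ρ i) (ρ j) from rfl]
    rcases Ez_pm (s := s) h with hE | hE <;>
      rcases Ez_pm_of_inj t x h with h1 | h1 <;>
      rcases Ez_pm_of_inj t ρ h with h4 | h4 <;>
      rcases Az_pm t (⇑x) (⇑ρ) i j with h2 | h2 <;>
      rcases Az_pm t (⇑x) (⇑ρ) j i with h3 | h3 <;>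
      rw [hE, h1, h4, h2, A'z_eq_neg t (⇑ρ) (⇑x) i j, h3] <;> norm_num

end Decomp

section Decomp2
variable {n : ℕ} [NeZero n]

lemma card_univ_zmod : (Finset.univ : Finset (ZMod n)).card = n := by
  rw [Finset.card_univ, ZMod.card]

lemma MGr_decomp (s t : ZMod n) (ρ x : Equiv.Perm (ZMod n)) :
    MGrC n s t ρ x = Phi n s (fun i j => ((WMz n t ρ x i j : ℤ) : ℚ)) / 4
      + (∑ i : ZMod n, ((Az n t (⇑x) (⇑ρ) i i : ℤ) : ℚ))/2 + 1 - (n:ℚ)/2 := by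
  have h1 : ∀ i : ZMod n,
      (∑ j : ZMod n, Jpt (genPtC n s t x i) (genPtC n s t x j))
      - (∑ j : ZMod n, Jpt (genPtC n s t x i) (oPtC n s t ρ j))
      - (∑ j : ZMod n, Jpt (oPtC n s t ρ i) (genPtC n s t x j))
      + (∑ j : ZMod n, Jpt (oPtC n s t ρ i) (oPtC n s t ρ j))
      = ∑ j : ZMod n, (((Ez n s i j : ℤ) : ℚ) * ((WMz n t ρ x i j : ℤ) : ℚ) / 4
          + (if i = j then ((Az n t (⇑x) (⇑ρ) i i : ℤ) : ℚ)/2 - 1/2 else 0)) := by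
    intro i
    rw [← Finset.sum_sub_distrib, ← Finset.sum_sub_distrib, ← Finset.sum_add_distrib]
    exact Finset.sum_congr rfl (fun j _ => MGr_pointwise s t ρ x i j)
  have h2 : MGrC n s t ρ x
      = (∑ i : ZMod n, ∑ j : ZMod n, (((Ez n s i j : ℤ) : ℚ) * ((WMz n t ρ x i j : ℤ) : ℚ) / 4
          + (if i = j then ((Az n t (⇑x) (⇑ρ) i i : ℤ) : ℚ)/2 - 1/2 else 0)))
        + 1 := by
    rw [MGrC, JJ, JJ, JJ, JJ, ← Finset.sum_sub_distrib, ← Finset.sum_sub_distrib,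
      ← Finset.sum_add_distrib]
    rw [Finset.sum_congr rfl (fun i _ => h1 i)]
  have hPhi : Phi n s (fun i j => ((WMz n t ρ x i j : ℤ) : ℚ)) / 4
      = ∑ i : ZMod n, ∑ j : ZMod n, ((Ez n s i j : ℤ) : ℚ) * ((WMz n t ρ x i j : ℤ) : ℚ) / 4 := by
    rw [Phi, Finset.sum_div]
    exact Finset.sum_congr rfl (fun i _ => by rw [Finset.sum_div])
  have hdiag : ∑ i : ZMod n, ∑ j : ZMod n,
      (if i = j then ((Az n t (⇑x) (⇑ρ) i i : ℤ) : ℚ)/2 - 1/2 else 0)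
      = (∑ i : ZMod n, ((Az n t (⇑x) (⇑ρ) i i : ℤ) : ℚ))/2 - (n:ℚ)/2 := by
    have e : ∀ i : ZMod n, ∑ j : ZMod n,
        (if i = j then ((Az n t (⇑x) (⇑ρ) i i : ℤ) : ℚ)/2 - 1/2 else 0)
        = ((Az n t (⇑x) (⇑ρ) i i : ℤ) : ℚ)/2 - 1/2 := by
      intro i
      rw [Finset.sum_ite_eq, if_pos (Finset.mem_univ i)]
    simp only [e]
    rw [Finset.sum_sub_distrib, Finset.sum_const, ← Finset.sum_div, card_univ_zmod]
    simp
    ring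
  rw [h2, Finset.sum_congr rfl
    (fun i (_ : i ∈ Finset.univ) => Finset.sum_add_distrib (s := Finset.univ)),
    Finset.sum_add_distrib, hdiag, ← hPhi]
  ring

end Decomp2

section RowCol
variable {n : ℕ} [NeZero n]

lemma row_Ez (t k : ZMod n) (σ : Equiv.Perm (ZMod n)) :
    ∑ j : ZMod n, ((Ez n t k (σ j) : ℤ) : ℚ) = 2*cCoord n t k + 1 - n := by
  have h := sum_coord t σ (fun u => ((sg (cCoord n t k - u) : ℤ) : ℚ))
  rw [show (∑ j : ZMod n, ((Ez n t k (σ j) : ℤ) : ℚ))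
      = ∑ j : ZMod n, ((sg (cCoord n t k - cCoord n t (σ j)) : ℤ) : ℚ) from rfl, h,
    show cCoord n t k = (((k - t).val : ℕ) : ℚ) from rfl,
    sum_sg_sub (ZMod.val_lt (k - t))]

lemma row_Az (t k : ZMod n) (σ : Equiv.Perm (ZMod n)) :
    ∑ j : ZMod n, ((sg (cCoord n t k - cCoord n t (σ j) - 1/2) : ℤ) : ℚ)
      = 2*cCoord n t k - n := by
  have h := sum_coord t σ (fun u => ((sg (cCoord n t k - u - 1/2) : ℤ) : ℚ))
  rw [h, show cCoord n t k = (((k - t).val : ℕ) : ℚ) from rfl,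
    sum_sg_sub_half (le_of_lt (ZMod.val_lt (k - t)))]

lemma row_A'z (t k : ZMod n) (σ : Equiv.Perm (ZMod n)) :
    ∑ j : ZMod n, ((sg (cCoord n t k - cCoord n t (σ j) + 1/2) : ℤ) : ℚ)
      = 2*cCoord n t k + 2 - n := by
  have h := sum_coord t σ (fun u => ((sg (cCoord n t k - u + 1/2) : ℤ) : ℚ))
  rw [h, show cCoord n t k = (((k - t).val : ℕ) : ℚ) from rfl,
    sum_sg_add_half (ZMod.val_lt (k - t))]

lemma col_Ez (t k : ZMod n) (σ : Equiv.Perm (ZMod n)) :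
    ∑ i : ZMod n, ((Ez n t (σ i) k : ℤ) : ℚ) = (n:ℚ) - 1 - 2*cCoord n t k := by
  have h := sum_coord t σ (fun u => ((sg (u - cCoord n t k) : ℤ) : ℚ))
  rw [show (∑ i : ZMod n, ((Ez n t (σ i) k : ℤ) : ℚ))
      = ∑ i : ZMod n, ((sg (cCoord n t (σ i) - cCoord n t k) : ℤ) : ℚ) from rfl, h,
    show cCoord n t k = (((k - t).val : ℕ) : ℚ) from rfl,
    sum_sg_sub' (ZMod.val_lt (k - t))]

lemma col_Az (t k : ZMod n) (σ : Equiv.Perm (ZMod n)) :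
    ∑ i : ZMod n, ((sg (cCoord n t (σ i) - cCoord n t k - 1/2) : ℤ) : ℚ)
      = (n:ℚ) - 2*cCoord n t k - 2 := by
  have h := sum_coord t σ (fun u => ((sg (u - cCoord n t k - 1/2) : ℤ) : ℚ))
  rw [h, show cCoord n t k = (((k - t).val : ℕ) : ℚ) from rfl,
    sum_sg_sub_half' (ZMod.val_lt (k - t))]

lemma col_A'z (t k : ZMod n) (σ : Equiv.Perm (ZMod n)) :
    ∑ i : ZMod n, ((sg (cCoord n t (σ i) - cCoord n t k + 1/2) : ℤ) : ℚ)
      = (n:ℚ) - 2*cCoord n t k := by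
  have h := sum_coord t σ (fun u => ((sg (u - cCoord n t k + 1/2) : ℤ) : ℚ))
  rw [h, show cCoord n t k = (((k - t).val : ℕ) : ℚ) from rfl,
    sum_sg_add_half' (le_of_lt (ZMod.val_lt (k - t)))]

lemma WM_row (t : ZMod n) (ρ x : Equiv.Perm (ZMod n)) (k : ZMod n) :
    ∑ j : ZMod n, ((WMz n t ρ x k j : ℤ) : ℚ) = 0 := by
  have h : ∀ j : ZMod n, ((WMz n t ρ x k j : ℤ) : ℚ)
      = ((Ez n t (x k) (x j) : ℤ) : ℚ)
        - ((sg (cCoord n t (x k) - cCoord n t (ρ j) - 1/2) : ℤ) : ℚ)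
        - ((sg (cCoord n t (ρ k) - cCoord n t (x j) + 1/2) : ℤ) : ℚ)
        + ((Ez n t (ρ k) (ρ j) : ℤ) : ℚ) := by
    intro j; rw [WMz]; push_cast; rfl
  simp only [h]
  rw [Finset.sum_add_distrib, Finset.sum_sub_distrib, Finset.sum_sub_distrib,
    row_Ez t (x k) x, row_Az t (x k) ρ, row_A'z t (ρ k) x, row_Ez t (ρ k) ρ]
  ring

lemma WM_col (t : ZMod n) (ρ x : Equiv.Perm (ZMod n)) (k : ZMod n) :
    ∑ i : ZMod n, ((WMz n t ρ x i k : ℤ) : ℚ) = 0 := by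
  have h : ∀ i : ZMod n, ((WMz n t ρ x i k : ℤ) : ℚ)
      = ((Ez n t (x i) (x k) : ℤ) : ℚ)
        - ((sg (cCoord n t (x i) - cCoord n t (ρ k) - 1/2) : ℤ) : ℚ)
        - ((sg (cCoord n t (ρ i) - cCoord n t (x k) + 1/2) : ℤ) : ℚ)
        + ((Ez n t (ρ i) (ρ k) : ℤ) : ℚ) := by
    intro i; rw [WMz]; push_cast; rfl
  simp only [h]
  rw [Finset.sum_add_distrib, Finset.sum_sub_distrib, Finset.sum_sub_distrib,
    col_Ez t (x k) x, col_Az t (ρ k) x, col_A'z t (x k) ρ, col_Ez t (ρ k) ρ]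
  ring

lemma MGr_shift (s s' t : ZMod n) (ρ x : Equiv.Perm (ZMod n)) :
    MGrC n s t ρ x = MGrC n s' t ρ x := by
  rw [MGr_decomp, MGr_decomp,
    Phi_shift (fun k => WM_row t ρ x k) (fun k => WM_col t ρ x k) s s']

end RowCol

section Transpose
variable {n : ℕ} [NeZero n]

lemma Jpt_swap (a b : ℚ × ℚ) : Jpt (Prod.swap a) (Prod.swap b) = Jpt a b := by
  simp [Jpt, mul_comm]

lemma JJ_transpose (f g f' g' : ZMod n → ℚ × ℚ) (e e' : Equiv.Perm (ZMod n))
    (hf : ∀ i, f' (e i) = Prod.swap (f i)) (hg : ∀ j, g' (e' j) = Prod.swap (g j)) :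
    JJ n f' g' = JJ n f g := by
  unfold JJ
  rw [← Equiv.sum_comp e (fun i => ∑ j : ZMod n, Jpt (f' i) (g' j))]
  apply Finset.sum_congr rfl; intro i _
  rw [← Equiv.sum_comp e' (fun j => Jpt (f' (e i)) (g' j))]
  apply Finset.sum_congr rfl; intro j _
  rw [hf, hg, Jpt_swap]

lemma gen_swap (s t : ZMod n) (x : Equiv.Perm (ZMod n)) :
    ∀ i, genPtC n t s x⁻¹ (x i) = Prod.swap (genPtC n s t x i) := by
  intro i; simp [genPtC, Prod.swap]

lemma o_swap (s t : ZMod n) (ρ : Equiv.Perm (ZMod n)) :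
    ∀ i, oPtC n t s ρ⁻¹ (ρ i) = Prod.swap (oPtC n s t ρ i) := by
  intro i; simp [oPtC, Prod.swap]

lemma MGr_transpose (s t : ZMod n) (ρ x : Equiv.Perm (ZMod n)) :
    MGrC n s t ρ x = MGrC n t s ρ⁻¹ x⁻¹ := by
  rw [MGrC, MGrC,
    JJ_transpose _ _ _ _ x x (gen_swap s t x) (gen_swap s t x),
    JJ_transpose _ _ _ _ x ρ (gen_swap s t x) (o_swap s t ρ),
    JJ_transpose _ _ _ _ ρ x (o_swap s t ρ) (gen_swap s t x),
    JJ_transpose _ _ _ _ ρ ρ (o_swap s t ρ) (o_swap s t ρ)]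

lemma MGr_inv (s t s' t' : ZMod n) (ρ x : Equiv.Perm (ZMod n)) :
    MGrC n s t ρ x = MGrC n s' t' ρ x := by
  rw [MGr_shift s s' t, MGr_transpose s' t, MGr_shift t t' s', ← MGr_transpose s' t']

end Transpose

def nu {n : ℕ} (μ : Equiv.Perm (ZMod n)) : Equiv.Perm (ZMod n) :=
  (Equiv.addRight (1 : ZMod n)).trans μ

def ASum (n : ℕ) [NeZero n] (s t : ZMod n) (x ρ ν : Equiv.Perm (ZMod n)) : ℚ :=
  JJ n (genPtC n s t x) (oPtC n s t ν) - JJ n (genPtC n s t x) (oPtC n s t ρ)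
    - (1/2) * (JJ n (oPtC n s t ν) (oPtC n s t ν) - JJ n (oPtC n s t ν) (oPtC n s t ρ)
        + JJ n (oPtC n s t ρ) (oPtC n s t ν) - JJ n (oPtC n s t ρ) (oPtC n s t ρ))
    - ((n : ℚ) - 1)/2

section ARed
variable {n : ℕ} [NeZero n]

lemma nu_apply (μ : Equiv.Perm (ZMod n)) (i : ZMod n) : nu μ i = μ (i + 1) := rfl

lemma xPt_succ (s t : ZMod n) (μ : Equiv.Perm (ZMod n)) (i : ZMod n) :
    xPtC n s t μ (i + 1) = oPtC n s t (nu μ) i := by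
  unfold xPtC oPtC
  rw [nu_apply, add_sub_cancel_right]

lemma JJ_x_right (s t : ZMod n) (μ : Equiv.Perm (ZMod n)) (f : ZMod n → ℚ × ℚ) :
    JJ n f (xPtC n s t μ) = JJ n f (oPtC n s t (nu μ)) := by
  unfold JJ
  apply Finset.sum_congr rfl; intro i _
  rw [← Equiv.sum_comp (Equiv.addRight (1 : ZMod n)) (fun j => Jpt (f i) (xPtC n s t μ j))]
  apply Finset.sum_congr rfl; intro j _
  rw [show (Equiv.addRight (1 : ZMod n)) j = j + 1 from rfl, xPt_succ]

lemma JJ_x_left (s t : ZMod n) (μ : Equiv.Perm (ZMod n)) (f : ZMod n → ℚ × ℚ) :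
    JJ n (xPtC n s t μ) f = JJ n (oPtC n s t (nu μ)) f := by
  unfold JJ
  rw [← Equiv.sum_comp (Equiv.addRight (1 : ZMod n))
    (fun i => ∑ j : ZMod n, Jpt (xPtC n s t μ i) (f j))]
  apply Finset.sum_congr rfl; intro i _
  rw [show (Equiv.addRight (1 : ZMod n)) i = i + 1 from rfl]
  apply Finset.sum_congr rfl; intro j _
  rw [xPt_succ]

lemma AGrC_eq_ASum (s t : ZMod n) (ρ x : Equiv.Perm (ZMod n)) :
    AGrC n s t ρ x = ASum n s t x ρ (nu ρ) := by
  rw [AGrC, ASum, JJ_x_right s t ρ, JJ_x_left s t ρ, JJ_x_right s t ρ, JJ_x_left s t ρ,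
    JJ_x_right s t ρ]

lemma ASum_transpose (s t : ZMod n) (x ρ ν : Equiv.Perm (ZMod n)) :
    ASum n s t x ρ ν = ASum n t s x⁻¹ ρ⁻¹ ν⁻¹ := by
  rw [ASum, ASum,
    JJ_transpose _ _ _ _ x ν (gen_swap s t x) (o_swap s t ν),
    JJ_transpose _ _ _ _ x ρ (gen_swap s t x) (o_swap s t ρ),
    JJ_transpose _ _ _ _ ν ν (o_swap s t ν) (o_swap s t ν),
    JJ_transpose _ _ _ _ ν ρ (o_swap s t ν) (o_swap s t ρ),
    JJ_transpose _ _ _ _ ρ ν (o_swap s t ρ) (o_swap s t ν),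
    JJ_transpose _ _ _ _ ρ ρ (o_swap s t ρ) (o_swap s t ρ)]

end ARed

def BAq (n : ℕ) (t : ZMod n) (x ρ ν : Equiv.Perm (ZMod n)) (i j : ZMod n) : ℚ :=
  ((Az n t (⇑x) (⇑ν) i j - Az n t (⇑x) (⇑ρ) i j : ℤ) : ℚ)
    - (1/2) * ((Ez n t (ν i) (ν j) - Ez n t (ν i) (ρ j)
        + Ez n t (ρ i) (ν j) - Ez n t (ρ i) (ρ j) : ℤ) : ℚ)

def Rq (n : ℕ) (t : ZMod n) (x ρ ν : Equiv.Perm (ZMod n)) (i j : ZMod n) : ℚ :=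
  - (if i = j then ((Az n t (⇑x) (⇑ν) i i - Az n t (⇑x) (⇑ρ) i i : ℤ) : ℚ)/4 else 0)
    - (1/8) * (((if i = j then 0 else 1)
        * ((Ez n t (ν i) (ν j))^2 - (Ez n t (ν i) (ρ j))^2
          + (Ez n t (ρ i) (ν j))^2 - (Ez n t (ρ i) (ρ j))^2) : ℤ) : ℚ)

section ADecomp
variable {n : ℕ} [NeZero n]

lemma A_pointwise (s t : ZMod n) (x ρ ν : Equiv.Perm (ZMod n)) (i j : ZMod n) :
    Jpt (genPtC n s t x i) (oPtC n s t ν j) - Jpt (genPtC n s t x i) (oPtC n s t ρ j)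
      - (1/2) * (Jpt (oPtC n s t ν i) (oPtC n s t ν j) - Jpt (oPtC n s t ν i) (oPtC n s t ρ j)
          + Jpt (oPtC n s t ρ i) (oPtC n s t ν j) - Jpt (oPtC n s t ρ i) (oPtC n s t ρ j))
    = ((Ez n s i j : ℤ) : ℚ) * BAq n t x ρ ν i j / 4 + Rq n t x ρ ν i j := by
  rw [Jpt_sg, Jpt_sg, Jpt_sg, Jpt_sg, Jpt_sg, Jpt_sg]
  have eP : ∀ (g : Equiv.Perm (ZMod n)),
      (genPtC n s t x i).1 - (oPtC n s t g j).1 = cCoord n s i - cCoord n s j - 1/2 := by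
    intro g; show cCoord n s i - (cCoord n s j + 1/2) = _; ring
  have eP' : ∀ (g : Equiv.Perm (ZMod n)),
      (genPtC n s t x i).2 - (oPtC n s t g j).2
        = cCoord n t (x i) - cCoord n t (g j) - 1/2 := by
    intro g; show cCoord n t (x i) - (cCoord n t (g j) + 1/2) = _; ring
  have eO : ∀ (f g : Equiv.Perm (ZMod n)),
      (oPtC n s t f i).1 - (oPtC n s t g j).1 = cCoord n s i - cCoord n s j := by
    intro f g; show cCoord n s i + 1/2 - (cCoord n s j + 1/2) = _; ring
  have eO' : ∀ (f g : Equiv.Perm (ZMod n)),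
      (oPtC n s t f i).2 - (oPtC n s t g j).2 = cCoord n t (f i) - cCoord n t (g j) := by
    intro f g; show cCoord n t (f i) + 1/2 - (cCoord n t (g j) + 1/2) = _; ring
  rw [eP, eP', eP, eP', eO, eO', eO, eO', eO, eO', eO, eO',
    sg_cc_sub_half s t,
    show sg (cCoord n t (x i) - cCoord n t (ν j) - 1/2) = Az n t (⇑x) (⇑ν) i j from rfl,
    show sg (cCoord n t (x i) - cCoord n t (ρ j) - 1/2) = Az n t (⇑x) (⇑ρ) i j from rfl,
    show sg (cCoord n s i - cCoord n s j) = Ez n s i j from rfl,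
    show sg (cCoord n t (ν i) - cCoord n t (ν j)) = Ez n t (ν i) (ν j) from rfl,
    show sg (cCoord n t (ν i) - cCoord n t (ρ j)) = Ez n t (ν i) (ρ j) from rfl,
    show sg (cCoord n t (ρ i) - cCoord n t (ν j)) = Ez n t (ρ i) (ν j) from rfl,
    show sg (cCoord n t (ρ i) - cCoord n t (ρ j)) = Ez n t (ρ i) (ρ j) from rfl,
    BAq, Rq]
  by_cases h : i = j
  · subst h
    rw [Ez_diag]
    rcases Az_pm t (⇑x) (⇑ν) i i with h1 | h1 <;>
      rcases Az_pm t (⇑x) (⇑ρ) i i with h2 | h2 <;>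
      rw [h1, h2] <;> push_cast <;> simp only [if_pos rfl, eq_self_iff_true, if_true] <;> ring
  · rw [if_neg h, if_neg h, if_neg h]
    rcases Ez_pm (s := s) h with hE | hE <;>
      rcases Az_pm t (⇑x) (⇑ν) i j with h1 | h1 <;>
      rcases Az_pm t (⇑x) (⇑ρ) i j with h2 | h2 <;>
      rw [hE, h1, h2] <;> push_cast <;> ring

end ADecomp

section ADecomp2
variable {n : ℕ} [NeZero n]

lemma ASum_decomp (s t : ZMod n) (x ρ ν : Equiv.Perm (ZMod n)) :
    ASum n s t x ρ ν = Phi n s (BAq n t x ρ ν) / 4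
      + (∑ i : ZMod n, ∑ j : ZMod n, Rq n t x ρ ν i j) - ((n:ℚ) - 1)/2 := by
  have h1 : ∀ i : ZMod n,
      (∑ j : ZMod n, Jpt (genPtC n s t x i) (oPtC n s t ν j))
      - (∑ j : ZMod n, Jpt (genPtC n s t x i) (oPtC n s t ρ j))
      - (1/2) * ((∑ j : ZMod n, Jpt (oPtC n s t ν i) (oPtC n s t ν j))
          - (∑ j : ZMod n, Jpt (oPtC n s t ν i) (oPtC n s t ρ j))
          + (∑ j : ZMod n, Jpt (oPtC n s t ρ i) (oPtC n s t ν j))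
          - (∑ j : ZMod n, Jpt (oPtC n s t ρ i) (oPtC n s t ρ j)))
      = ∑ j : ZMod n, (((Ez n s i j : ℤ) : ℚ) * BAq n t x ρ ν i j / 4 + Rq n t x ρ ν i j) := by
    intro i
    rw [← Finset.sum_sub_distrib, ← Finset.sum_sub_distrib, ← Finset.sum_add_distrib,
      ← Finset.sum_sub_distrib, Finset.mul_sum, ← Finset.sum_sub_distrib]
    exact Finset.sum_congr rfl (fun j _ => A_pointwise s t x ρ ν i j)
  have h2 : ASum n s t x ρ ν
      = (∑ i : ZMod n, ∑ j : ZMod n,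
          (((Ez n s i j : ℤ) : ℚ) * BAq n t x ρ ν i j / 4 + Rq n t x ρ ν i j))
        - ((n:ℚ) - 1)/2 := by
    rw [ASum, JJ, JJ, JJ, JJ, JJ, JJ, ← Finset.sum_sub_distrib, ← Finset.sum_sub_distrib,
      ← Finset.sum_add_distrib, ← Finset.sum_sub_distrib, Finset.mul_sum,
      ← Finset.sum_sub_distrib]
    rw [Finset.sum_congr rfl (fun i _ => h1 i)]
  have hPhi : Phi n s (BAq n t x ρ ν) / 4
      = ∑ i : ZMod n, ∑ j : ZMod n, ((Ez n s i j : ℤ) : ℚ) * BAq n t x ρ ν i j / 4 := by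
    rw [Phi, Finset.sum_div]
    exact Finset.sum_congr rfl (fun i _ => by rw [Finset.sum_div])
  rw [h2, Finset.sum_congr rfl
    (fun i (_ : i ∈ Finset.univ) => Finset.sum_add_distrib (s := Finset.univ)),
    Finset.sum_add_distrib, ← hPhi]

lemma BA_row (t : ZMod n) (x ρ ν : Equiv.Perm (ZMod n)) (k : ZMod n) :
    ∑ j : ZMod n, BAq n t x ρ ν k j = 0 := by
  have h : ∀ j : ZMod n, BAq n t x ρ ν k j
      = (((sg (cCoord n t (x k) - cCoord n t (ν j) - 1/2) : ℤ) : ℚ)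
          - ((sg (cCoord n t (x k) - cCoord n t (ρ j) - 1/2) : ℤ) : ℚ))
        - (1/2) * (((Ez n t (ν k) (ν j) : ℤ) : ℚ) - ((Ez n t (ν k) (ρ j) : ℤ) : ℚ)
            + ((Ez n t (ρ k) (ν j) : ℤ) : ℚ) - ((Ez n t (ρ k) (ρ j) : ℤ) : ℚ)) := by
    intro j; rw [BAq]; push_cast; rfl
  simp only [h]
  rw [Finset.sum_sub_distrib, Finset.sum_sub_distrib, ← Finset.mul_sum,
    Finset.sum_sub_distrib, Finset.sum_add_distrib, Finset.sum_sub_distrib,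
    row_Az t (x k) ν, row_Az t (x k) ρ, row_Ez t (ν k) ν, row_Ez t (ν k) ρ,
    row_Ez t (ρ k) ν, row_Ez t (ρ k) ρ]
  ring

lemma BA_col (t : ZMod n) (x ρ ν : Equiv.Perm (ZMod n)) (k : ZMod n) :
    ∑ i : ZMod n, BAq n t x ρ ν i k = 0 := by
  have h : ∀ i : ZMod n, BAq n t x ρ ν i k
      = (((sg (cCoord n t (x i) - cCoord n t (ν k) - 1/2) : ℤ) : ℚ)
          - ((sg (cCoord n t (x i) - cCoord n t (ρ k) - 1/2) : ℤ) : ℚ))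
        - (1/2) * (((Ez n t (ν i) (ν k) : ℤ) : ℚ) - ((Ez n t (ν i) (ρ k) : ℤ) : ℚ)
            + ((Ez n t (ρ i) (ν k) : ℤ) : ℚ) - ((Ez n t (ρ i) (ρ k) : ℤ) : ℚ)) := by
    intro i; rw [BAq]; push_cast; rfl
  simp only [h]
  rw [Finset.sum_sub_distrib, Finset.sum_sub_distrib, ← Finset.mul_sum,
    Finset.sum_sub_distrib, Finset.sum_add_distrib, Finset.sum_sub_distrib,
    col_Az t (ν k) x, col_Az t (ρ k) x, col_Ez t (ν k) ν, col_Ez t (ρ k) ν,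
    col_Ez t (ν k) ρ, col_Ez t (ρ k) ρ]
  ring

lemma ASum_shift (s s' t : ZMod n) (x ρ ν : Equiv.Perm (ZMod n)) :
    ASum n s t x ρ ν = ASum n s' t x ρ ν := by
  rw [ASum_decomp, ASum_decomp,
    Phi_shift (fun k => BA_row t x ρ ν k) (fun k => BA_col t x ρ ν k) s s']

lemma AGr_inv (s t s' t' : ZMod n) (ρ x : Equiv.Perm (ZMod n)) :
    AGrC n s t ρ x = AGrC n s' t' ρ x := by
  rw [AGrC_eq_ASum, AGrC_eq_ASum, ASum_shift s s' t, ASum_transpose s' t,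
    ASum_shift t t' s', ← ASum_transpose s' t']

end ADecomp2

section IntM
variable {n : ℕ} [NeZero n]

lemma E'_parity (t : ZMod n) (x ρ : Equiv.Perm (ZMod n)) :
    (2:ℤ) ∣ (∑ i : ZMod n, Az n t (⇑x) (⇑ρ) i i) - n := by
  have h : ∀ i : ZMod n, ((Az n t (⇑x) (⇑ρ) i i : ℤ) : ZMod 2) = 1 := by
    intro i; rcases Az_pm t (⇑x) (⇑ρ) i i with h|h <;> rw [h] <;> decide
  have h2 : (((∑ i : ZMod n, Az n t (⇑x) (⇑ρ) i i) - n : ℤ) : ZMod 2) = 0 := by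
    push_cast
    rw [Finset.sum_congr rfl (fun i _ => h i), Finset.sum_const, card_univ_zmod]
    simp
  exact_mod_cast (ZMod.intCast_zmod_eq_zero_iff_dvd _ 2).1 h2

lemma Uz_pair (s t : ZMod n) (ρ x : Equiv.Perm (ZMod n)) (i j : ZMod n) :
    (4:ℤ) ∣ Ez n s i j * WMz n t ρ x i j + Ez n s j i * WMz n t ρ x j i := by
  by_cases h : i = j
  · subst h; rw [Ez_diag]; simp
  · have hji : ¬ j = i := fun hc => h hc.symm
    rw [WMz, WMz, A'z_eq_neg t (⇑ρ) (⇑x) i j, A'z_eq_neg t (⇑ρ) (⇑x) j i,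
      Ez_antisymm s i j, Ez_antisymm t (x i) (x j), Ez_antisymm t (ρ i) (ρ j)]
    rcases Ez_pm (s := s) h with hE|hE <;>
      rcases Ez_pm_of_inj t x h with h1|h1 <;>
      rcases Ez_pm_of_inj t ρ h with h4|h4 <;>
      rcases Az_pm t (⇑x) (⇑ρ) i j with ha|ha <;>
      rcases Az_pm t (⇑x) (⇑ρ) j i with hb|hb <;>
      rw [hE, h1, h4, ha, hb] <;> decide
  
lemma Uz_div4 (s t : ZMod n) (ρ x : Equiv.Perm (ZMod n)) :
    (4:ℤ) ∣ ∑ i : ZMod n, ∑ j : ZMod n, Ez n s i j * WMz n t ρ x i j := by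
  have h0 : (((∑ i : ZMod n, ∑ j : ZMod n, Ez n s i j * WMz n t ρ x i j : ℤ)) : ZMod 4)
      = ∑ p ∈ (Finset.univ ×ˢ Finset.univ : Finset (ZMod n × ZMod n)),
          ((Ez n s p.1 p.2 * WMz n t ρ x p.1 p.2 : ℤ) : ZMod 4) := by
    rw [Finset.sum_product]
    push_cast
    rfl
  have h1 : ∑ p ∈ (Finset.univ ×ˢ Finset.univ : Finset (ZMod n × ZMod n)),
      ((Ez n s p.1 p.2 * WMz n t ρ x p.1 p.2 : ℤ) : ZMod 4) = 0 := by
    apply Finset.sum_involution (fun p _ => Prod.swap p)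
    · intro p _
      have := Uz_pair s t ρ x p.1 p.2
      obtain ⟨c, hc⟩ := this
      show ((Ez n s p.1 p.2 * WMz n t ρ x p.1 p.2 : ℤ) : ZMod 4)
        + ((Ez n s p.2 p.1 * WMz n t ρ x p.2 p.1 : ℤ) : ZMod 4) = 0
      rw [← Int.cast_add, hc]
      have h4 : ((4:ℕ):ℤ) ∣ 4*c := ⟨c, by push_cast; ring⟩
      exact (ZMod.intCast_zmod_eq_zero_iff_dvd _ 4).2 h4
    · intro p _ hne
      intro hc
      apply hne
      have hp : p.2 = p.1 := congrArg Prod.fst hc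
      show ((Ez n s p.1 p.2 * WMz n t ρ x p.1 p.2 : ℤ) : ZMod 4) = 0
      rw [hp, Ez_diag]
      simp
    · intro p _; exact Finset.mem_product.2 ⟨Finset.mem_univ _, Finset.mem_univ _⟩
    · intro p _; exact Prod.swap_swap p
  rw [h1] at h0
  exact_mod_cast (ZMod.intCast_zmod_eq_zero_iff_dvd _ 4).1 h0

lemma M_int (ρ x : Equiv.Perm (ZMod n)) : ∃ m : ℤ, MGrC n 0 0 ρ x = (m : ℚ) := by
  obtain ⟨u, hu⟩ := Uz_div4 (n := n) 0 0 ρ x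
  obtain ⟨e, he⟩ := E'_parity (n := n) 0 x ρ
  refine ⟨u + e + 1, ?_⟩
  rw [MGr_decomp]
  have hPhi : Phi n 0 (fun i j => ((WMz n 0 ρ x i j : ℤ) : ℚ))
      = ((∑ i : ZMod n, ∑ j : ZMod n, Ez n 0 i j * WMz n 0 ρ x i j : ℤ) : ℚ) := by
    rw [Phi]; push_cast; rfl
  have hE' : (∑ i : ZMod n, ((Az n 0 (⇑x) (⇑ρ) i i : ℤ) : ℚ))
      = ((∑ i : ZMod n, Az n 0 (⇑x) (⇑ρ) i i : ℤ) : ℚ) := by push_cast; rfl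
  rw [hPhi, hE', hu]
  have he' : ((∑ i : ZMod n, Az n 0 (⇑x) (⇑ρ) i i : ℤ) : ℚ) = 2*e + n := by
    have h3 : (∑ i : ZMod n, Az n 0 (⇑x) (⇑ρ) i i : ℤ) = 2*e + n := by omega
    exact_mod_cast h3
  rw [he']
  push_cast
  ring

end IntM

section AInt
variable {n : ℕ} [NeZero n]

lemma sum2_sub (F G : ZMod n → ZMod n → ℚ) :
    ∑ i : ZMod n, ∑ j : ZMod n, (F i j - G i j)
      = (∑ i : ZMod n, ∑ j : ZMod n, F i j) - ∑ i : ZMod n, ∑ j : ZMod n, G i j := by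
  rw [← Finset.sum_sub_distrib]
  exact Finset.sum_congr rfl (fun i _ => by rw [← Finset.sum_sub_distrib])

lemma sum2_add (F G : ZMod n → ZMod n → ℚ) :
    ∑ i : ZMod n, ∑ j : ZMod n, (F i j + G i j)
      = (∑ i : ZMod n, ∑ j : ZMod n, F i j) + ∑ i : ZMod n, ∑ j : ZMod n, G i j := by
  rw [← Finset.sum_add_distrib]
  exact Finset.sum_congr rfl (fun i _ => by rw [← Finset.sum_add_distrib])

lemma sum2_mul (c : ℚ) (F : ZMod n → ZMod n → ℚ) :
    ∑ i : ZMod n, ∑ j : ZMod n, c * F i j = c * ∑ i : ZMod n, ∑ j : ZMod n, F i j := by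
  rw [Finset.mul_sum]
  exact Finset.sum_congr rfl (fun i _ => by rw [Finset.mul_sum])

lemma cCoord_zero (k : ZMod n) : cCoord n 0 k = (k.val : ℚ) := by rw [cCoord, sub_zero]

lemma Ez_sq_one (t : ZMod n) (σ : Equiv.Perm (ZMod n)) {i j : ZMod n} (h : i ≠ j) :
    (Ez n t (σ i) (σ j))^2 = 1 := by
  rcases Ez_pm_of_inj t σ h with h1|h1 <;> rw [h1] <;> norm_num

lemma Ez_sq_comm (t : ZMod n) (a b : ZMod n) : (Ez n t a b)^2 = (Ez n t b a)^2 := by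
  rw [Ez_antisymm]; ring

lemma Phi_cross (s t : ZMod n) (f g : Equiv.Perm (ZMod n)) :
    Phi n s (fun i j => ((Ez n t (f i) (g j) : ℤ) : ℚ))
      = Phi n s (fun i j => ((Ez n t (g i) (f j) : ℤ) : ℚ)) := by
  rw [Phi, Phi, Finset.sum_comm]
  apply Finset.sum_congr rfl; intro a _
  apply Finset.sum_congr rfl; intro b _
  rw [Ez_antisymm s a b, Ez_antisymm t (g a) (f b)]
  push_cast
  ring

lemma Rq_sum (x ρ : Equiv.Perm (ZMod n)) :
    ∑ i : ZMod n, ∑ j : ZMod n, Rq n 0 x ρ (nu ρ) i j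
      = -((∑ i : ZMod n, ((Az n 0 (⇑x) (⇑(nu ρ)) i i : ℤ) : ℚ))
          - ∑ i : ZMod n, ((Az n 0 (⇑x) (⇑ρ) i i : ℤ) : ℚ))/4 := by
  set ν := nu ρ with hν
  have hpt : ∀ i j : ZMod n, Rq n 0 x ρ ν i j
      = (- (if i = j then ((Az n 0 (⇑x) (⇑ν) i i - Az n 0 (⇑x) (⇑ρ) i i : ℤ) : ℚ)/4 else 0))
        + (-(1/8) * ((((if i = j then 0 else 1) * (Ez n 0 (ρ i) (ν j))^2 : ℤ) : ℚ)
          - (((if i = j then 0 else 1) * (Ez n 0 (ν i) (ρ j))^2 : ℤ) : ℚ))) := by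
    intro i j
    rw [Rq]
    by_cases h : i = j
    · subst h; simp
    · rw [if_neg h, if_neg h, Ez_sq_one 0 ν h, Ez_sq_one 0 ρ h]
      push_cast
      ring
  simp only [hpt]
  rw [sum2_add]
  have h1 : ∑ i : ZMod n, ∑ j : ZMod n,
      (- (if i = j then ((Az n 0 (⇑x) (⇑ν) i i - Az n 0 (⇑x) (⇑ρ) i i : ℤ) : ℚ)/4 else 0))
      = -((∑ i : ZMod n, ((Az n 0 (⇑x) (⇑ν) i i : ℤ) : ℚ))
          - ∑ i : ZMod n, ((Az n 0 (⇑x) (⇑ρ) i i : ℤ) : ℚ))/4 := by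
    have e : ∀ i : ZMod n, ∑ j : ZMod n,
        (- (if i = j then ((Az n 0 (⇑x) (⇑ν) i i - Az n 0 (⇑x) (⇑ρ) i i : ℤ) : ℚ)/4 else 0))
        = -(1/4) * ((Az n 0 (⇑x) (⇑ν) i i : ℤ) : ℚ)
          + (1/4) * ((Az n 0 (⇑x) (⇑ρ) i i : ℤ) : ℚ) := by
      intro i
      rw [Finset.sum_neg_distrib, Finset.sum_ite_eq, if_pos (Finset.mem_univ i)]
      push_cast
      ring
    simp only [e]
    rw [Finset.sum_add_distrib, ← Finset.mul_sum, ← Finset.mul_sum]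
    ring
  have h2 : ∑ i : ZMod n, ∑ j : ZMod n,
      (-(1/8) * ((((if i = j then 0 else 1) * (Ez n 0 (ρ i) (ν j))^2 : ℤ) : ℚ)
          - (((if i = j then 0 else 1) * (Ez n 0 (ν i) (ρ j))^2 : ℤ) : ℚ))) = 0 := by
    rw [sum2_mul (-(1/8)) (fun i j =>
      ((((if i = j then 0 else 1) * (Ez n 0 (ρ i) (ν j))^2 : ℤ) : ℚ)
        - (((if i = j then 0 else 1) * (Ez n 0 (ν i) (ρ j))^2 : ℤ) : ℚ))), sum2_sub]
    have hPQ : (∑ i : ZMod n, ∑ j : ZMod n,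
          (((if i = j then 0 else 1) * (Ez n 0 (ρ i) (ν j))^2 : ℤ) : ℚ))
        = ∑ i : ZMod n, ∑ j : ZMod n,
          (((if i = j then 0 else 1) * (Ez n 0 (ν i) (ρ j))^2 : ℤ) : ℚ) := by
      rw [Finset.sum_comm]
      apply Finset.sum_congr rfl; intro a _
      apply Finset.sum_congr rfl; intro b _
      rw [Ez_sq_comm 0 (ρ b) (ν a)]
      by_cases h : a = b
      · subst h; rfl
      · rw [if_neg h, if_neg (fun hc => h hc.symm)]
    rw [hPQ]
    ring
  rw [h1, h2]
  ring

lemma cCoord_one_succ (i : ZMod n) : cCoord n 1 (i + 1) = cCoord n 0 i := by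
  rw [cCoord, cCoord, add_sub_cancel_right, sub_zero]

lemma Phi_nu (ρ : Equiv.Perm (ZMod n)) :
    Phi n 0 (fun i j => ((Ez n 0 (nu ρ i) (nu ρ j) : ℤ) : ℚ))
      = Phi n 1 (fun i j => ((Ez n 0 (ρ i) (ρ j) : ℤ) : ℚ)) := by
  rw [Phi, Phi]
  rw [← Equiv.sum_comp (Equiv.addRight (1 : ZMod n))
    (fun i => ∑ j : ZMod n, ((Ez n 1 i j : ℤ) : ℚ) * ((Ez n 0 (ρ i) (ρ j) : ℤ) : ℚ))]
  apply Finset.sum_congr rfl; intro i _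
  rw [← Equiv.sum_comp (Equiv.addRight (1 : ZMod n))
    (fun j => ((Ez n 1 ((Equiv.addRight (1 : ZMod n)) i) j : ℤ) : ℚ)
      * ((Ez n 0 (ρ ((Equiv.addRight (1 : ZMod n)) i)) (ρ j) : ℤ) : ℚ))]
  apply Finset.sum_congr rfl; intro j _
  have e1 : Ez n 1 ((Equiv.addRight (1 : ZMod n)) i) ((Equiv.addRight (1 : ZMod n)) j)
      = Ez n 0 i j := by
    show Ez n 1 (i + 1) (j + 1) = Ez n 0 i j
    rw [Ez, Ez, cCoord_one_succ, cCoord_one_succ]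
  rw [e1]
  rfl

lemma beta_pt (x ρ : Equiv.Perm (ZMod n)) (i j : ZMod n) :
    ((sg (cCoord n 0 i - cCoord n 0 (j - 1) - 1/2) : ℤ) : ℚ)
        * ((Az n 0 (⇑x) (⇑ρ) i j : ℤ) : ℚ)
      - ((sg (cCoord n 0 i - cCoord n 0 j - 1/2) : ℤ) : ℚ)
        * ((Az n 0 (⇑x) (⇑ρ) i j : ℤ) : ℚ)
    = (if j = 0 then (-2) * ((Az n 0 (⇑x) (⇑ρ) i 0 : ℤ) : ℚ) else 0)
      + (if i = j then 2 * ((Az n 0 (⇑x) (⇑ρ) i j : ℤ) : ℚ) else 0) := by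
  by_cases hj : j = 0
  · subst hj
    have hv1 : cCoord n 0 ((0 : ZMod n) - 1) = ((n - 1 : ℕ) : ℚ) := by
      rw [cCoord_zero, zero_sub, val_neg_one']
    have hv0 : cCoord n 0 (0 : ZMod n) = ((0 : ℕ) : ℚ) := by
      rw [cCoord_zero, ZMod.val_zero]
    have hb1 : sg (cCoord n 0 i - cCoord n 0 ((0 : ZMod n) - 1) - 1/2) = -1 := by
      rw [hv1, cCoord_zero, sg_natsub_half, if_neg (by have := ZMod.val_lt i; omega)]
    by_cases hi : i = 0
    · subst hi
      have hb0 : sg (cCoord n 0 (0 : ZMod n) - cCoord n 0 (0 : ZMod n) - 1/2) = -1 := by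
        rw [hv0, sg_natsub_half, if_neg (by omega)]
      rw [hb1, hb0, if_pos rfl, if_pos rfl]
      push_cast
      ring
    · have hvi : 1 ≤ i.val := by
        rcases Nat.eq_zero_or_pos i.val with h0|h0
        · exact absurd (by rwa [ZMod.val_eq_zero] at h0) hi
        · exact h0
      have hb0 : sg (cCoord n 0 i - cCoord n 0 (0 : ZMod n) - 1/2) = 1 := by
        rw [hv0, cCoord_zero, sg_natsub_half, if_pos (by omega)]
      rw [hb1, hb0, if_pos rfl, if_neg hi]
      push_cast
      ring
  · have hjne : j - 1 + 1 = j := by ring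
    have hvj : 1 ≤ j.val := by
      rcases Nat.eq_zero_or_pos j.val with h0|h0
      · exact absurd (by rwa [ZMod.val_eq_zero] at h0) hj
      · exact h0
    have hj1 : (j - 1).val = j.val - 1 := (val_sub_one (fun hc => hj (by
      have := congrArg (· + 1) hc; simpa using this))).1
    rw [if_neg hj]
    by_cases hij : i = j
    · subst hij
      have hb1 : sg (cCoord n 0 i - cCoord n 0 (i - 1) - 1/2) = 1 := by
        rw [cCoord_zero, cCoord_zero, hj1, sg_natsub_half, if_pos (by omega)]
      have hb0 : sg (cCoord n 0 i - cCoord n 0 i - 1/2) = -1 := by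
        rw [cCoord_zero, sg_natsub_half, if_neg (by omega)]
      rw [hb1, hb0, if_pos rfl]
      push_cast
      ring
    · have hvij : i.val ≠ j.val := fun hc => hij (ZMod.val_injective n hc)
      have hb1 : sg (cCoord n 0 i - cCoord n 0 (j - 1) - 1/2)
          = sg (cCoord n 0 i - cCoord n 0 j - 1/2) := by
        rw [cCoord_zero, cCoord_zero, cCoord_zero, hj1, sg_natsub_half, sg_natsub_half]
        have : (j.val - 1 < i.val) ↔ (j.val < i.val) := by omega
        by_cases hlt : j.val < i.val
        · rw [if_pos (this.2 hlt), if_pos hlt]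
        · rw [if_neg (fun hc => hlt (this.1 hc)), if_neg hlt]
      rw [hb1, if_neg hij]
      push_cast
      ring

lemma a_boundary (x ρ : Equiv.Perm (ZMod n)) :
    (Phi n 0 (fun i j => ((Az n 0 (⇑x) (⇑(nu ρ)) i j : ℤ) : ℚ))
        - ∑ i : ZMod n, ((Az n 0 (⇑x) (⇑(nu ρ)) i i : ℤ) : ℚ))
      - (Phi n 0 (fun i j => ((Az n 0 (⇑x) (⇑ρ) i j : ℤ) : ℚ))
        - ∑ i : ZMod n, ((Az n 0 (⇑x) (⇑ρ) i i : ℤ) : ℚ))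
    = 2 * (∑ i : ZMod n, ((Az n 0 (⇑x) (⇑ρ) i i : ℤ) : ℚ))
      - 2 * ((n:ℚ) - 2*cCoord n 0 (ρ 0) - 2) := by
  set ν := nu ρ with hν
  have hbeta : ∀ (g : Equiv.Perm (ZMod n)),
      Phi n 0 (fun i j => ((Az n 0 (⇑x) (⇑g) i j : ℤ) : ℚ))
        - ∑ i : ZMod n, ((Az n 0 (⇑x) (⇑g) i i : ℤ) : ℚ)
      = ∑ i : ZMod n, ∑ j : ZMod n,
          ((sg (cCoord n 0 i - cCoord n 0 j - 1/2) : ℤ) : ℚ)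
            * ((Az n 0 (⇑x) (⇑g) i j : ℤ) : ℚ) := by
    intro g
    have hpt : ∀ i j : ZMod n,
        ((sg (cCoord n 0 i - cCoord n 0 j - 1/2) : ℤ) : ℚ) * ((Az n 0 (⇑x) (⇑g) i j : ℤ) : ℚ)
        = ((Ez n 0 i j : ℤ) : ℚ) * ((Az n 0 (⇑x) (⇑g) i j : ℤ) : ℚ)
          - (if i = j then ((Az n 0 (⇑x) (⇑g) i i : ℤ) : ℚ) else 0) := by
      intro i j
      rw [sg_cc_sub_half 0 0]
      by_cases h : i = j
      · subst h; rw [if_pos rfl, if_pos rfl]; push_cast; ring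
      · rw [if_neg h, if_neg h]; push_cast; ring
    simp only [hpt]
    rw [sum2_sub, Phi]
    have hd : ∀ i : ZMod n, ∑ j : ZMod n,
        (if i = j then ((Az n 0 (⇑x) (⇑g) i i : ℤ) : ℚ) else 0)
        = ((Az n 0 (⇑x) (⇑g) i i : ℤ) : ℚ) := by
      intro i
      rw [Finset.sum_ite_eq, if_pos (Finset.mem_univ i)]
    simp only [hd]
  rw [hbeta ν, hbeta ρ]
  have hshift : ∀ i : ZMod n, ∑ j : ZMod n,
      ((sg (cCoord n 0 i - cCoord n 0 j - 1/2) : ℤ) : ℚ) * ((Az n 0 (⇑x) (⇑ν) i j : ℤ) : ℚ)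
      = ∑ j : ZMod n,
        ((sg (cCoord n 0 i - cCoord n 0 (j - 1) - 1/2) : ℤ) : ℚ)
          * ((Az n 0 (⇑x) (⇑ρ) i j : ℤ) : ℚ) := by
    intro i
    have hcomp := Equiv.sum_comp (Equiv.addRight (1 : ZMod n))
      (fun j => ((sg (cCoord n 0 i - cCoord n 0 (j - 1) - 1/2) : ℤ) : ℚ)
        * ((Az n 0 (⇑x) (⇑ρ) i j : ℤ) : ℚ))
    rw [← hcomp]
    apply Finset.sum_congr rfl; intro j _
    show ((sg (cCoord n 0 i - cCoord n 0 j - 1/2) : ℤ) : ℚ) * ((Az n 0 (⇑x) (⇑ν) i j : ℤ) : ℚ)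
      = ((sg (cCoord n 0 i - cCoord n 0 (j + 1 - 1) - 1/2) : ℤ) : ℚ)
        * ((Az n 0 (⇑x) (⇑ρ) i (j + 1) : ℤ) : ℚ)
    rw [add_sub_cancel_right]
    rfl
  rw [Finset.sum_congr rfl (fun i (_ : i ∈ Finset.univ) => hshift i), ← sum2_sub]
  have hpt2 : ∀ i j : ZMod n,
      ((sg (cCoord n 0 i - cCoord n 0 (j - 1) - 1/2) : ℤ) : ℚ)
          * ((Az n 0 (⇑x) (⇑ρ) i j : ℤ) : ℚ)
        - ((sg (cCoord n 0 i - cCoord n 0 j - 1/2) : ℤ) : ℚ)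
          * ((Az n 0 (⇑x) (⇑ρ) i j : ℤ) : ℚ)
      = (if j = 0 then (-2) * ((Az n 0 (⇑x) (⇑ρ) i 0 : ℤ) : ℚ) else 0)
        + (if i = j then 2 * ((Az n 0 (⇑x) (⇑ρ) i j : ℤ) : ℚ) else 0) :=
    beta_pt x ρ
  simp only [hpt2]
  rw [sum2_add]
  have h3 : ∑ i : ZMod n, ∑ j : ZMod n,
      (if j = 0 then (-2) * ((Az n 0 (⇑x) (⇑ρ) i 0 : ℤ) : ℚ) else 0)
      = -2 * ∑ i : ZMod n, ((Az n 0 (⇑x) (⇑ρ) i 0 : ℤ) : ℚ) := by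
    have e : ∀ i : ZMod n, ∑ j : ZMod n,
        (if j = 0 then (-2) * ((Az n 0 (⇑x) (⇑ρ) i 0 : ℤ) : ℚ) else 0)
        = (-2) * ((Az n 0 (⇑x) (⇑ρ) i 0 : ℤ) : ℚ) := by
      intro i
      rw [Finset.sum_ite_eq', if_pos (Finset.mem_univ (0 : ZMod n))]
    simp only [e]
    rw [← Finset.mul_sum]
  have h4 : ∑ i : ZMod n, ∑ j : ZMod n,
      (if i = j then 2 * ((Az n 0 (⇑x) (⇑ρ) i j : ℤ) : ℚ) else 0)
      = 2 * ∑ i : ZMod n, ((Az n 0 (⇑x) (⇑ρ) i i : ℤ) : ℚ) := by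
    have e : ∀ i : ZMod n, ∑ j : ZMod n,
        (if i = j then 2 * ((Az n 0 (⇑x) (⇑ρ) i j : ℤ) : ℚ) else 0)
        = 2 * ((Az n 0 (⇑x) (⇑ρ) i i : ℤ) : ℚ) := by
      intro i
      rw [Finset.sum_ite_eq, if_pos (Finset.mem_univ i)]
    simp only [e]
    rw [← Finset.mul_sum]
  rw [h3, h4]
  have h5 : ∑ i : ZMod n, ((Az n 0 (⇑x) (⇑ρ) i 0 : ℤ) : ℚ)
      = (n:ℚ) - 2*cCoord n 0 (ρ 0) - 2 := col_Az 0 (ρ 0) x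
  rw [h5]
  ring

end AInt

section AFinal
variable {n : ℕ} [NeZero n]

lemma Phi_BA (s t : ZMod n) (x ρ ν : Equiv.Perm (ZMod n)) :
    Phi n s (BAq n t x ρ ν)
      = Phi n s (fun i j => ((Az n t (⇑x) (⇑ν) i j : ℤ) : ℚ))
        - Phi n s (fun i j => ((Az n t (⇑x) (⇑ρ) i j : ℤ) : ℚ))
        - (1/2) * Phi n s (fun i j => ((Ez n t (ν i) (ν j) : ℤ) : ℚ))
        + (1/2) * Phi n s (fun i j => ((Ez n t (ν i) (ρ j) : ℤ) : ℚ))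
        - (1/2) * Phi n s (fun i j => ((Ez n t (ρ i) (ν j) : ℤ) : ℚ))
        + (1/2) * Phi n s (fun i j => ((Ez n t (ρ i) (ρ j) : ℤ) : ℚ)) := by
  have hpt : ∀ i j : ZMod n, ((Ez n s i j : ℤ) : ℚ) * BAq n t x ρ ν i j
      = ((Ez n s i j : ℤ) : ℚ) * ((Az n t (⇑x) (⇑ν) i j : ℤ) : ℚ)
        - ((Ez n s i j : ℤ) : ℚ) * ((Az n t (⇑x) (⇑ρ) i j : ℤ) : ℚ)
        - (1/2) * (((Ez n s i j : ℤ) : ℚ) * ((Ez n t (ν i) (ν j) : ℤ) : ℚ))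
        + (1/2) * (((Ez n s i j : ℤ) : ℚ) * ((Ez n t (ν i) (ρ j) : ℤ) : ℚ))
        - (1/2) * (((Ez n s i j : ℤ) : ℚ) * ((Ez n t (ρ i) (ν j) : ℤ) : ℚ))
        + (1/2) * (((Ez n s i j : ℤ) : ℚ) * ((Ez n t (ρ i) (ρ j) : ℤ) : ℚ)) := by
    intro i j
    rw [BAq]
    push_cast
    ring
  rw [Phi]
  simp only [hpt]
  rw [sum2_add, sum2_sub, sum2_add, sum2_sub, sum2_sub,
    sum2_mul (1/2 : ℚ), sum2_mul (1/2 : ℚ), sum2_mul (1/2 : ℚ), sum2_mul (1/2 : ℚ)]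
  rw [Phi, Phi, Phi, Phi, Phi, Phi]

lemma B2_eval (ρ : Equiv.Perm (ZMod n)) :
    Phi n 0 (fun i j => ((Ez n 0 (nu ρ i) (nu ρ j) : ℤ) : ℚ))
      = Phi n 0 (fun i j => ((Ez n 0 (ρ i) (ρ j) : ℤ) : ℚ))
        + 8*cCoord n 0 (ρ 0) + 4 - 4*n := by
  rw [Phi_nu, show (1 : ZMod n) = 0 + 1 from (zero_add 1).symm,
    Phi_step 0 (fun i j => ((Ez n 0 (ρ i) (ρ j) : ℤ) : ℚ))]
  have h1 : ∑ j : ZMod n, (fun i j => ((Ez n 0 (ρ i) (ρ j) : ℤ) : ℚ)) 0 j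
      = 2*cCoord n 0 (ρ 0) + 1 - n := row_Ez 0 (ρ 0) ρ
  have h2 : ∑ i : ZMod n, (fun i j => ((Ez n 0 (ρ i) (ρ j) : ℤ) : ℚ)) i 0
      = (n:ℚ) - 1 - 2*cCoord n 0 (ρ 0) := col_Ez 0 (ρ 0) ρ
  rw [h1, h2]
  ring

lemma A_closed (ρ x : Equiv.Perm (ZMod n)) :
    AGrC n 0 0 ρ x
      = 1 + ((∑ i : ZMod n, ((Az n 0 (⇑x) (⇑ρ) i i : ℤ) : ℚ)) - n)/2 := by
  rw [AGrC_eq_ASum, ASum_decomp, Rq_sum, Phi_BA]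
  have hcross := Phi_cross (n := n) 0 0 (nu ρ) ρ
  have hB2 := B2_eval (n := n) ρ
  have habd := a_boundary x ρ
  set c := cCoord n 0 (ρ 0) with hc
  set Sν := ∑ i : ZMod n, ((Az n 0 (⇑x) (⇑(nu ρ)) i i : ℤ) : ℚ) with hSν
  set Sρ := ∑ i : ZMod n, ((Az n 0 (⇑x) (⇑ρ) i i : ℤ) : ℚ) with hSρ
  set P1 := Phi n 0 (fun i j => ((Az n 0 (⇑x) (⇑(nu ρ)) i j : ℤ) : ℚ)) with hP1
  set P2 := Phi n 0 (fun i j => ((Az n 0 (⇑x) (⇑ρ) i j : ℤ) : ℚ)) with hP2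
  set Q1 := Phi n 0 (fun i j => ((Ez n 0 (nu ρ i) (nu ρ j) : ℤ) : ℚ)) with hQ1
  set Q2 := Phi n 0 (fun i j => ((Ez n 0 (nu ρ i) (ρ j) : ℤ) : ℚ)) with hQ2
  set Q3 := Phi n 0 (fun i j => ((Ez n 0 (ρ i) (nu ρ j) : ℤ) : ℚ)) with hQ3
  set Q4 := Phi n 0 (fun i j => ((Ez n 0 (ρ i) (ρ j) : ℤ) : ℚ)) with hQ4
  -- hcross : Q2 = Q3, hB2 : Q1 = Q4 + 8c + 4 - 4n, habd : (P1 - Sν) - (P2 - Sρ) = 2Sρ - 2(n - 2c - 2)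
  linarith [hcross, hB2, habd]

lemma A_int (ρ x : Equiv.Perm (ZMod n)) : ∃ a : ℤ, AGrC n 0 0 ρ x = (a : ℚ) := by
  obtain ⟨e, he⟩ := E'_parity (n := n) 0 x ρ
  refine ⟨1 + e, ?_⟩
  rw [A_closed]
  have hE' : (∑ i : ZMod n, ((Az n 0 (⇑x) (⇑ρ) i i : ℤ) : ℚ))
      = ((∑ i : ZMod n, Az n 0 (⇑x) (⇑ρ) i i : ℤ) : ℚ) := by push_cast; rfl
  have h3 : (∑ i : ZMod n, Az n 0 (⇑x) (⇑ρ) i i : ℤ) = 2*e + n := by omega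
  rw [hE', h3]
  push_cast
  ring

end AFinal


/-- The Maslov and Alexander gradings of a generator are independent of the choice
of α and β circles along which the torus is cut open, and are integers. -/
theorem gradings_welldefined_integral (n : ℕ) [NeZero n]
    (ρ x : Equiv.Perm (ZMod n)) :
    (∀ s t s' t' : ZMod n,
      MGrC n s t ρ x = MGrC n s' t' ρ x ∧ AGrC n s t ρ x = AGrC n s' t' ρ x) ∧
    (∃ m : ℤ, MGrC n 0 0 ρ x = (m : ℚ)) ∧
    (∃ a : ℤ, AGrC n 0 0 ρ x = (a : ℚ)) := by
  exact ⟨fun s t s' t' => ⟨MGr_inv s t s' t' ρ x, AGr_inv s t s' t' ρ x⟩,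
    M_int ρ x, A_int ρ x⟩
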